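/- Define the persistent hierarchy h(t) = β_0^t / #P^t, where β_0^t is the number of connected components of the MCF complex K^t and #P^t the number of clusters of P^t. Then h(t) = 1 for all t ≥ t_1 if and only if the sequence of partitions P^{t_1} ≤ P^{t_2} ≤ ... ≤ P^{t_M} is strictly hierarchical (each partition refines the next). -/

import Mathlib

open Finset

/-- The 1-skeleton graph of the MCF complex `K^T`. -/
def mcfGraph {X : Type*} [Fintype X] [DecidableEq X] {M : ℕ}
    (P : Fin M → Finpartition (univ : Finset X)) (t : Fin M → ℝ) (T : ℝ) :
    SimpleGraph X where
  Adj x y := x ≠ y ∧ ∃ s, t s ≤ T ∧ ∃ C ∈ (P s).parts, x ∈ C ∧ y ∈ C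
  symm := by
    constructor
    rintro x y ⟨hxy, s, hs, C, hC, hx, hy⟩
    exact ⟨hxy.symm, s, hs, C, hC, hy, hx⟩
  loopless := ⟨fun x h => h.1 rfl⟩

/-- The persistent hierarchy `h(t) = β₀ᵗ / #Pᵗ` of the MCF. -/
noncomputable def persistentHierarchy {X : Type*} [Fintype X] [DecidableEq X] {M : ℕ}
    (P : Fin M → Finpartition (univ : Finset X)) (t : Fin M → ℝ) (m : Fin M) : ℝ :=
  (Nat.card (mcfGraph P t (t m)).ConnectedComponent : ℝ) / (P m).parts.card

section AuxMCF

variable {X : Type*} [Fintype X] [DecidableEq X] {M : ℕ}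
  (P : Fin M → Finpartition (univ : Finset X)) (t : Fin M → ℝ)

lemma mcf_reachable_of_mem_part {T : ℝ} {s : Fin M} (hs : t s ≤ T) {C : Finset X}
    (hC : C ∈ (P s).parts) {x y : X} (hx : x ∈ C) (hy : y ∈ C) :
    (mcfGraph P t T).Reachable x y := by
  by_cases h : x = y
  · exact h ▸ SimpleGraph.Reachable.refl x
  · exact SimpleGraph.Adj.reachable ⟨h, s, hs, C, hC, hx, hy⟩

/-- Choice-based map from parts of `P m` to connected components of `K^{t m}`. -/
noncomputable def mcfPartToCC (m : Fin M) :
    {C // C ∈ (P m).parts} → (mcfGraph P t (t m)).ConnectedComponent :=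
  fun C => (mcfGraph P t (t m)).connectedComponentMk
    ((P m).nonempty_of_mem_parts C.2).choose

lemma mcfPartToCC_part (m : Fin M) (x : X) :
    mcfPartToCC P t m ⟨(P m).part x, (P m).part_mem.2 (mem_univ x)⟩ =
      (mcfGraph P t (t m)).connectedComponentMk x := by
  apply SimpleGraph.ConnectedComponent.sound
  exact mcf_reachable_of_mem_part P t le_rfl ((P m).part_mem.2 (mem_univ x))
    ((P m).nonempty_of_mem_parts ((P m).part_mem.2 (mem_univ x))).choose_spec
    ((P m).mem_part (mem_univ x))

lemma mcfPartToCC_surjective (m : Fin M) : Function.Surjective (mcfPartToCC P t m) := by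
  intro c
  obtain ⟨x, rfl⟩ := c.exists_rep
  exact ⟨⟨(P m).part x, (P m).part_mem.2 (mem_univ x)⟩, mcfPartToCC_part P t m x⟩

end AuxMCF

/-- `h(t) ≡ 1` iff the sequence of partitions is strictly hierarchical,
i.e. each partition refines the later ones. -/
theorem persistentHierarchy_eq_one_iff_hierarchical
    {X : Type*} [Fintype X] [DecidableEq X] [Nonempty X] {M : ℕ}
    (P : Fin M → Finpartition (univ : Finset X)) (t : Fin M → ℝ) (ht : StrictMono t) :
    (∀ m : Fin M, persistentHierarchy P t m = 1) ↔
      ∀ i j : Fin M, i ≤ j → P i ≤ P j := by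
  have hpartsne : ∀ m : Fin M, (P m).parts.card ≠ 0 := by
    intro m
    rw [Finset.card_ne_zero]
    exact (P m).parts_nonempty (Finset.univ_nonempty.ne_empty)
  -- reformulate `h(m) = 1` as a cardinality equation
  have hcard : ∀ m : Fin M, persistentHierarchy P t m = 1 ↔
      Nat.card (mcfGraph P t (t m)).ConnectedComponent = (P m).parts.card := by
    intro m
    unfold persistentHierarchy
    rw [div_eq_one_iff_eq (by exact_mod_cast hpartsne m)]
    exact_mod_cast Iff.rfl
  constructor
  · intro h i j hij A hA
    have hinj : Function.Injective (mcfPartToCC P t j) := by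
      have := (Nat.bijective_iff_surjective_and_card (mcfPartToCC P t j)).2
        ⟨mcfPartToCC_surjective P t j, by
          rw [Nat.card_eq_fintype_card, Fintype.card_coe]
          exact ((hcard j).1 (h j)).symm⟩
      exact this.1
    obtain ⟨x, hx⟩ := (P i).nonempty_of_mem_parts hA
    refine ⟨(P j).part x, (P j).part_mem.2 (mem_univ x), fun y hy => ?_⟩
    have hreach : (mcfGraph P t (t j)).Reachable x y :=
      mcf_reachable_of_mem_part P t (ht.le_iff_le.2 hij) hA hx hy
    have : mcfPartToCC P t j ⟨(P j).part x, (P j).part_mem.2 (mem_univ x)⟩ =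
        mcfPartToCC P t j ⟨(P j).part y, (P j).part_mem.2 (mem_univ y)⟩ := by
      rw [mcfPartToCC_part, mcfPartToCC_part]
      exact SimpleGraph.ConnectedComponent.sound hreach
    have hpp : (P j).part x = (P j).part y := congrArg Subtype.val (hinj this)
    rw [hpp]
    exact (P j).mem_part (mem_univ y)
  · intro h m
    rw [hcard m]
    -- under the hierarchical hypothesis, reachability implies same part of `P m`
    have key : ∀ x y : X, (mcfGraph P t (t m)).Reachable x y →
        (P m).part x = (P m).part y := by
      intro x y hr
      obtain ⟨w⟩ := hr
      induction w with
      | nil => rfl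
      | cons ha _ ih =>
        refine Eq.trans ?_ ih
        obtain ⟨-, s, hs, C, hC, hx, hz⟩ := ha
        obtain ⟨B, hB, hCB⟩ := h s m (ht.le_iff_le.1 hs) hC
        rw [(P m).part_eq_of_mem hB (hCB hx), (P m).part_eq_of_mem hB (hCB hz)]
    have hinj : Function.Injective (mcfPartToCC P t m) := by
      rintro ⟨C, hC⟩ ⟨D, hD⟩ hCD
      have hxC := ((P m).nonempty_of_mem_parts hC).choose_spec
      have hxD := ((P m).nonempty_of_mem_parts hD).choose_spec
      have hr : (mcfGraph P t (t m)).Reachable _ _ :=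
        SimpleGraph.ConnectedComponent.exact hCD
      have := key _ _ hr
      rw [(P m).part_eq_of_mem hC hxC, (P m).part_eq_of_mem hD hxD] at this
      exact Subtype.ext this
    have hbij : Function.Bijective (mcfPartToCC P t m) :=
      ⟨hinj, mcfPartToCC_surjective P t m⟩
    rw [← Nat.card_eq_of_bijective _ hbij, Nat.card_eq_fintype_card, Fintype.card_coe]
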